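/- Let t ∈ ℝ, let C ⊆ ℝ be a nonempty compact set, u : ℝ → ℝ continuous, λ ≥ 0 a real constant, and V, W : ℝ → ℝ with W continuous at t and V continuous at t from the right. Let r : ℝ → ℝ with r(τ)/τ → 0 as τ → 0⁺, and suppose that for all sufficiently small τ > 0, V(t) = sup_{c ∈ C} [ u(c)·τ + λ·c·τ·W(t + τ) + (1 − λ·c·τ)·V(t + τ) ] + r(τ). Then V has a right derivative at t (a derivative within [t,∞)) equal to −sup_{c ∈ C} [ u(c) + λ·c·(W(t) − V(t)) ]. -/

import Mathlib

open Filter Set Topology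

/-- The dynamic-programming recursion with maximization over a compact set of
contact rates,
`V(t) = sup_{c ∈ C} [u(c)τ + λcτ·W(t+τ) + (1-λcτ)·V(t+τ)] + o(τ)`,
yields the Hamilton–Jacobi ODE
`V' = -sup_{c ∈ C} [u(c) + λc(W - V)]` as a right derivative at `t`. -/
theorem dp_recursion_susceptible_right_deriv
    (t : ℝ) (C : Set ℝ) (hC : C.Nonempty) (hCcomp : IsCompact C)
    (u : ℝ → ℝ) (hu : Continuous u) (lam : ℝ) (hlam : 0 ≤ lam)
    (V W : ℝ → ℝ) (hW : ContinuousAt W t)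
    (hV : ContinuousWithinAt V (Set.Ici t) t)
    (r : ℝ → ℝ) (hr : Tendsto (fun τ => r τ / τ) (𝓝[>] (0 : ℝ)) (𝓝 0))
    (hrec : ∀ᶠ τ in 𝓝[>] (0 : ℝ),
      V t = sSup ((fun c =>
          u c * τ + lam * c * τ * W (t + τ) + (1 - lam * c * τ) * V (t + τ)) '' C)
        + r τ) :
    HasDerivWithinAt V
      (-sSup ((fun c => u c + lam * c * (W t - V t)) '' C)) (Set.Ici t) t := by
  classical
  set S : ℝ → ℝ := fun a => sSup ((fun c => u c + lam * c * a) '' C) with hSdef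
  -- compactness of images
  have hKa : ∀ a : ℝ, IsCompact ((fun c => u c + lam * c * a) '' C) := by
    intro a
    exact hCcomp.image (by continuity)
  -- bound on C
  obtain ⟨M, hM0, hM⟩ : ∃ M : ℝ, 0 ≤ M ∧ ∀ c ∈ C, |c| ≤ M := by
    obtain ⟨M, hM⟩ := hCcomp.exists_bound_of_continuousOn continuousOn_id
    refine ⟨max M 0, le_max_right _ _, fun c hc => ?_⟩
    have := hM c hc
    simp only [Real.norm_eq_abs] at this
    exact this.trans (le_max_left _ _)
  -- Lipschitz-type estimate for S
  have key : ∀ a b : ℝ, S a ≤ S b + lam * M * |a - b| := by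
    intro a b
    apply csSup_le ((hC.image _))
    rintro x ⟨c, hc, rfl⟩
    have h1 : u c + lam * c * b ≤ S b := le_csSup (hKa b).bddAbove ⟨c, hc, rfl⟩
    have h2 : lam * c * a - lam * c * b ≤ lam * M * |a - b| := by
      have he : lam * c * a - lam * c * b = lam * c * (a - b) := by ring
      rw [he]
      calc lam * c * (a - b) ≤ |lam * c * (a - b)| := le_abs_self _
        _ = lam * |c| * |a - b| := by
            rw [abs_mul, abs_mul, abs_of_nonneg hlam]
        _ ≤ lam * M * |a - b| := by
            apply mul_le_mul_of_nonneg_right _ (abs_nonneg _)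
            exact mul_le_mul_of_nonneg_left (hM c hc) hlam
    show u c + lam * c * a ≤ _
    linarith
  have habs : ∀ a b : ℝ, |S a - S b| ≤ lam * M * |a - b| := by
    intro a b
    rw [abs_sub_le_iff]
    constructor
    · have := key a b; linarith
    · have := key b a; rw [abs_sub_comm] at this; linarith
  have hScont : Continuous S := by
    have hL : LipschitzWith (Real.toNNReal (lam * M)) S := by
      apply LipschitzWith.of_dist_le_mul
      intro a b
      simp only [Real.dist_eq]
      calc |S a - S b| ≤ lam * M * |a - b| := habs a b
        _ ≤ Real.toNNReal (lam * M) * |a - b| := by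
            gcongr
            exact Real.le_coe_toNNReal _
    exact hL.continuous
  -- affine rewriting of the sup for τ > 0
  have haff : ∀ τ : ℝ, 0 < τ →
      sSup ((fun c => u c * τ + lam * c * τ * W (t + τ)
          + (1 - lam * c * τ) * V (t + τ)) '' C)
        = τ * S (W (t + τ) - V (t + τ)) + V (t + τ) := by
    intro τ hτ
    set a : ℝ := W (t + τ) - V (t + τ) with ha
    have himg : (fun c => u c * τ + lam * c * τ * W (t + τ)
          + (1 - lam * c * τ) * V (t + τ)) '' C
        = (fun x => τ * x + V (t + τ)) '' ((fun c => u c + lam * c * a) '' C) := by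
      rw [← Set.image_comp]
      apply Set.image_congr
      intro c _
      simp only [Function.comp_apply, ha]
      ring
    rw [himg]
    have hmono : Monotone (fun x : ℝ => τ * x + V (t + τ)) := by
      intro x y h
      have := mul_le_mul_of_nonneg_left h hτ.le
      dsimp
      linarith
    rw [← Monotone.map_csSup_of_continuousAt (by fun_prop) hmono
      (hC.image _) (hKa a).bddAbove]
  -- change of variable filter lemma
  have hsub : Tendsto (fun x : ℝ => x - t) (𝓝[>] t) (𝓝[>] (0 : ℝ)) := by
    apply tendsto_nhdsWithin_of_tendsto_nhds_of_eventually_within _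
    · have : Tendsto (fun x : ℝ => x - t) (𝓝 t) (𝓝 (t - t)) :=
        (continuous_id.sub continuous_const).continuousAt
      simpa using this.mono_left nhdsWithin_le_nhds
    · filter_upwards [self_mem_nhdsWithin] with x hx
      exact sub_pos.mpr (Set.mem_Ioi.mp hx)
  -- limits of V and W from the right
  have hVt : Tendsto V (𝓝[>] t) (𝓝 (V t)) :=
    hV.mono_left (nhdsWithin_mono _ Ioi_subset_Ici_self)
  have hWt : Tendsto W (𝓝[>] t) (𝓝 (W t)) :=
    hW.mono_left nhdsWithin_le_nhds
  have hStend : Tendsto (fun x => S (W x - V x)) (𝓝[>] t) (𝓝 (S (W t - V t))) :=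
    (hScont.continuousAt.tendsto).comp (hWt.sub hVt)
  have hr' : Tendsto (fun x => r (x - t) / (x - t)) (𝓝[>] t) (𝓝 0) :=
    hr.comp hsub
  -- slope formula
  have hslope : ∀ᶠ x in 𝓝[>] t,
      slope V t x = -S (W x - V x) - r (x - t) / (x - t) := by
    filter_upwards [hsub.eventually hrec, self_mem_nhdsWithin] with x hx hxt
    have hτ : 0 < x - t := sub_pos.mpr hxt
    have hxx : t + (x - t) = x := by ring
    rw [haff (x - t) hτ, hxx] at hx
    have hVx : V x - V t = -((x - t) * S (W x - V x)) - r (x - t) := by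
      linarith
    rw [slope_def_field, div_eq_iff (ne_of_gt hτ)]
    rw [hVx]
    field_simp
  have hfinal : Tendsto (slope V t) (𝓝[>] t)
      (𝓝 (-S (W t - V t))) := by
    have : Tendsto (fun x => -S (W x - V x) - r (x - t) / (x - t)) (𝓝[>] t)
        (𝓝 (-S (W t - V t) - 0)) := hStend.neg.sub hr'
    rw [sub_zero] at this
    exact Tendsto.congr' (hslope.mono fun x hx => hx.symm) this
  rw [hasDerivWithinAt_iff_tendsto_slope, (by ext x; simp [lt_iff_le_and_ne, eq_comm] : Set.Ici t \ {t} = Set.Ioi t)]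
  exact hfinal
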